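/- Let X ∈ ℝ^{n×p} have full row rank with n < p, let P = Xᵀ(XXᵀ)^{-1}X (the orthogonal projection onto the row space of X), let F ∈ ℝ^{p×n}, and let Σ ∈ ℝ^{p×p} be symmetric positive semidefinite. Set G = Fᵀ(I_p − P) + (XXᵀ)^{-1}X ∈ ℝ^{n×p}. Then the predictive model degrees of freedom of the gradient-descent interpolating model with initialization β^{(0)} = Fy equals n/2 + (n/2)·tr(GᵀGΣ). Moreover, if Σ = I_p, then tr(GᵀG) ≥ tr(Xᵀ(XXᵀ)^{-2}X), with equality if and only if (I_p − P)F = 0 (i.e., the limiting model coincides with the minimum-norm least squares model). Hence df_R(β^{(∞)}) ≥ df_R(β̂) when Σ = I_p. -/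

import Mathlib

open Matrix MeasureTheory

lemma trace_mul_transpose_self_eq_sum {m n : ℕ} (M : Matrix (Fin m) (Fin n) ℝ) :
    (M * Mᵀ).trace = ∑ i, ∑ j, (M i j) ^ 2 := by
  simp [Matrix.trace, Matrix.mul_apply, Matrix.diag, sq]

lemma trace_mul_transpose_self_nonneg {m n : ℕ} (M : Matrix (Fin m) (Fin n) ℝ) :
    0 ≤ (M * Mᵀ).trace := by
  rw [trace_mul_transpose_self_eq_sum]
  exact Finset.sum_nonneg fun i _ => Finset.sum_nonneg fun j _ => sq_nonneg _

lemma trace_mul_transpose_self_eq_zero_iff {m n : ℕ} (M : Matrix (Fin m) (Fin n) ℝ) :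
    (M * Mᵀ).trace = 0 ↔ M = 0 := by
  rw [trace_mul_transpose_self_eq_sum]
  constructor
  · intro h
    ext i j
    have h1 : ∀ i ∈ Finset.univ, (0:ℝ) ≤ ∑ j, (M i j) ^ 2 :=
      fun i _ => Finset.sum_nonneg fun j _ => sq_nonneg _
    have h2 := (Finset.sum_eq_zero_iff_of_nonneg h1).mp h i (Finset.mem_univ i)
    have h3 := (Finset.sum_eq_zero_iff_of_nonneg
      (fun j _ => sq_nonneg (M i j))).mp h2 j (Finset.mem_univ j)
    simpa using (pow_eq_zero_iff (two_ne_zero)).mp h3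
  · intro h
    simp [h]

/-- For the gradient-descent interpolating model with data-dependent
initialization `β^{(0)} = Fy`, whose hat vector is `h(x) = Gx` with
`G = Fᵀ(I_p − P) + (XXᵀ)⁻¹X`, the predictive model degrees of freedom equals
`n/2 + (n/2)·tr(GᵀGΣ)`; and when `Σ = I_p` it is at least that of the minimum-norm
least squares model, with equality iff `(I_p − P)F = 0`. -/
theorem dfR_gradient_descent_interpolant
    {Ω : Type*} [MeasurableSpace Ω] (P' : Measure Ω) [IsProbabilityMeasure P']
    {n p : ℕ} (hnp : n < p)
    (X : Matrix (Fin n) (Fin p) ℝ) (hX : X.rank = n)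
    (P : Matrix (Fin p) (Fin p) ℝ) (hP : P = Xᵀ * (X * Xᵀ)⁻¹ * X)
    (F : Matrix (Fin p) (Fin n) ℝ)
    (Sig : Matrix (Fin p) (Fin p) ℝ) (hSig : Sig.PosSemidef)
    (G : Matrix (Fin n) (Fin p) ℝ)
    (hG : G = Fᵀ * (1 - P) + (X * Xᵀ)⁻¹ * X)
    (xstar : Ω → Fin p → ℝ) (hxmeas : Measurable xstar)
    (hxL2 : ∀ i, MemLp (fun ω => xstar ω i) 2 P')
    (hxmom : ∀ i j, ∫ ω, xstar ω i * xstar ω j ∂P' = Sig i j) :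
    ((n : ℝ) / 2 + ((n : ℝ) / 2) * ∫ ω, ∑ i, ((G *ᵥ xstar ω) i) ^ 2 ∂P' =
        (n : ℝ) / 2 + ((n : ℝ) / 2) * (Gᵀ * G * Sig).trace) ∧
      (Sig = 1 →
        ((Xᵀ * (X * Xᵀ)⁻¹ ^ 2 * X).trace ≤ (Gᵀ * G).trace ∧
          ((Gᵀ * G).trace = (Xᵀ * (X * Xᵀ)⁻¹ ^ 2 * X).trace ↔ (1 - P) * F = 0) ∧
          (n : ℝ) / 2 + ((n : ℝ) / 2) * (Xᵀ * (X * Xᵀ)⁻¹ ^ 2 * X).trace ≤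
            (n : ℝ) / 2 + ((n : ℝ) / 2) * (Gᵀ * G).trace)) := by
  -- XXᵀ is invertible
  have hsurj : Function.Surjective (X * Xᵀ).mulVec := by
    have hr : (X * Xᵀ).rank = n := by rw [Matrix.rank_self_mul_transpose, hX]
    rw [Matrix.rank] at hr
    have htop : LinearMap.range (X * Xᵀ).mulVecLin = ⊤ :=
      Submodule.eq_top_of_finrank_eq (by rw [hr, Module.finrank_fin_fun])
    intro v
    obtain ⟨w, hw⟩ := LinearMap.range_eq_top.mp htop v
    exact ⟨w, hw⟩
  have hU : IsUnit (X * Xᵀ) := Matrix.mulVec_surjective_iff_isUnit.mp hsurj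
  have hUd : IsUnit (X * Xᵀ).det := (Matrix.isUnit_iff_isUnit_det _).mp hU
  have hinv1 : (X * Xᵀ) * (X * Xᵀ)⁻¹ = 1 := Matrix.mul_nonsing_inv _ hUd
  have hinv2 : (X * Xᵀ)⁻¹ * (X * Xᵀ) = 1 := Matrix.nonsing_inv_mul _ hUd
  -- symmetry of (XXᵀ)⁻¹ and P
  have hAsymm : ((X * Xᵀ)⁻¹)ᵀ = (X * Xᵀ)⁻¹ := by
    rw [Matrix.transpose_nonsing_inv]
    congr 1
    rw [Matrix.transpose_mul, Matrix.transpose_transpose]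
  have hPsymm : Pᵀ = P := by
    rw [hP, Matrix.transpose_mul, Matrix.transpose_mul, Matrix.transpose_transpose,
      hAsymm, Matrix.mul_assoc]
  -- X(1 - P) = 0
  have hXP : X * (1 - P) = 0 := by
    rw [hP, Matrix.mul_sub, Matrix.mul_one, ← Matrix.mul_assoc, ← Matrix.mul_assoc,
      hinv1]
    simp
  have hPX : (1 - P) * Xᵀ = 0 := by
    have := congrArg Matrix.transpose hXP
    rw [Matrix.transpose_mul, Matrix.transpose_sub, Matrix.transpose_one, hPsymm] at this
    simpa using this
  -- expansion of GᵀG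
  have hGT : Gᵀ = (1 - P) * F + Xᵀ * (X * Xᵀ)⁻¹ := by
    rw [hG, Matrix.transpose_add, Matrix.transpose_mul, Matrix.transpose_mul,
      Matrix.transpose_transpose, Matrix.transpose_sub, Matrix.transpose_one, hPsymm,
      hAsymm]
  have hexp : Gᵀ * G =
      ((1 - P) * F) * (Fᵀ * (1 - P)) + ((1 - P) * F) * ((X * Xᵀ)⁻¹ * X)
        + (Xᵀ * (X * Xᵀ)⁻¹) * (Fᵀ * (1 - P)) + Xᵀ * (X * Xᵀ)⁻¹ ^ 2 * X := by
    rw [hGT, hG, Matrix.add_mul, Matrix.mul_add, Matrix.mul_add, sq]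
    simp only [Matrix.mul_assoc]
    abel
  -- traces of cross terms vanish
  have hcross1 : (((1 - P) * F) * ((X * Xᵀ)⁻¹ * X)).trace = 0 := by
    rw [Matrix.trace_mul_comm, ← Matrix.mul_assoc, Matrix.mul_assoc _ X (1 - P), hXP]
    simp
  have hcross2 : ((Xᵀ * (X * Xᵀ)⁻¹) * (Fᵀ * (1 - P))).trace = 0 := by
    rw [Matrix.trace_mul_comm, Matrix.mul_assoc, ← Matrix.mul_assoc (1 - P) Xᵀ, hPX]
    simp
  have htr : (Gᵀ * G).trace =
      (((1 - P) * F) * ((1 - P) * F)ᵀ).trace + (Xᵀ * (X * Xᵀ)⁻¹ ^ 2 * X).trace := by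
    have hMT : ((1 - P) * F)ᵀ = Fᵀ * (1 - P) := by
      rw [Matrix.transpose_mul, Matrix.transpose_sub, Matrix.transpose_one, hPsymm]
    rw [hexp, Matrix.trace_add, Matrix.trace_add, Matrix.trace_add, hcross1, hcross2, hMT]
    ring
  -- the integral identity
  have hint : ∀ j k : Fin p, Integrable (fun ω => xstar ω j * xstar ω k) P' := by
    intro j k
    have h1 : (1 : ENNReal) / 1 = 1 / 2 + 1 / 2 := by
      rw [ENNReal.div_add_div_same]
      norm_num
      exact (ENNReal.div_self two_ne_zero ENNReal.ofNat_ne_top).symm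
    have := ((hxL2 k).smul (hxL2 j) :
      MemLp ((fun ω => xstar ω j) • (fun ω => xstar ω k)) 1 P')
    rw [memLp_one_iff_integrable] at this
    exact this
  have hkey : ∫ ω, ∑ i, ((G *ᵥ xstar ω) i) ^ 2 ∂P' = (Gᵀ * G * Sig).trace := by
    have hexpand : ∀ ω, ∑ i, ((G *ᵥ xstar ω) i) ^ 2 =
        ∑ i, ∑ j, ∑ k, (G i j * G i k) * (xstar ω j * xstar ω k) := by
      intro ω
      refine Finset.sum_congr rfl fun i _ => ?_
      have : (G *ᵥ xstar ω) i = ∑ j, G i j * xstar ω j := by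
        simp [Matrix.mulVec, dotProduct]
      rw [this, sq, Finset.sum_mul_sum]
      exact Finset.sum_congr rfl fun j _ => Finset.sum_congr rfl fun k _ => by ring
    have I1 : ∀ (i : Fin n) (j k : Fin p),
        Integrable (fun ω => (G i j * G i k) * (xstar ω j * xstar ω k)) P' :=
      fun i j k => (hint j k).const_mul _
    have I2 : ∀ (i : Fin n) (j : Fin p),
        Integrable (fun ω => ∑ k, (G i j * G i k) * (xstar ω j * xstar ω k)) P' :=
      fun i j => integrable_finset_sum _ fun k _ => I1 i j k
    have I3 : ∀ i : Fin n,
        Integrable (fun ω => ∑ j, ∑ k, (G i j * G i k) * (xstar ω j * xstar ω k)) P' :=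
      fun i => integrable_finset_sum _ fun j _ => I2 i j
    calc ∫ ω, ∑ i, ((G *ᵥ xstar ω) i) ^ 2 ∂P'
        = ∫ ω, ∑ i, ∑ j, ∑ k, (G i j * G i k) * (xstar ω j * xstar ω k) ∂P' := by
          exact integral_congr_ae (Filter.Eventually.of_forall hexpand)
      _ = ∑ i, ∑ j, ∑ k, (G i j * G i k) * Sig j k := by
          rw [integral_finset_sum _ fun i _ => I3 i]
          refine Finset.sum_congr rfl fun i _ => ?_
          rw [integral_finset_sum _ fun j _ => I2 i j]
          refine Finset.sum_congr rfl fun j _ => ?_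
          rw [integral_finset_sum _ fun k _ => I1 i j k]
          refine Finset.sum_congr rfl fun k _ => ?_
          rw [MeasureTheory.integral_const_mul, hxmom]
      _ = (Gᵀ * G * Sig).trace := by
          have hSs : ∀ j k, Sig j k = Sig k j := by
            intro j k
            rw [← hxmom j k, ← hxmom k j]
            exact integral_congr_ae (Filter.Eventually.of_forall fun ω => mul_comm _ _)
          simp only [Matrix.trace, Matrix.diag, Matrix.mul_apply, Matrix.transpose_apply,
            Finset.sum_mul]
          rw [Finset.sum_comm]
          refine Finset.sum_congr rfl fun j _ => ?_
          rw [Finset.sum_comm]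
          refine Finset.sum_congr rfl fun k _ => ?_
          simp [hSs j k]
  constructor
  · rw [hkey]
  · intro hSig1
    have hineq : (Xᵀ * (X * Xᵀ)⁻¹ ^ 2 * X).trace ≤ (Gᵀ * G).trace := by
      rw [htr]
      have := trace_mul_transpose_self_nonneg ((1 - P) * F)
      linarith
    refine ⟨hineq, ?_, ?_⟩
    · rw [htr]
      constructor
      · intro h
        have h0 : (((1 - P) * F) * ((1 - P) * F)ᵀ).trace = 0 := by linarith
        exact (trace_mul_transpose_self_eq_zero_iff _).mp h0
      · intro h
        rw [h]
        simp
    · have hn : (0:ℝ) ≤ (n : ℝ) / 2 := by positivity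
      have := mul_le_mul_of_nonneg_left hineq hn
      linarith
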